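/- arXiv:2505.12836 — 2 statements merged into one kernel-verified Lean document; each statement's English description precedes it below -/
import Mathlib

section
/- Let K be an m×n real matrix with trivial kernel (so m ≥ n), and let φ₁,...,φₘ : ℝ → ℝ₊₊ be bounded integrable positive functions. Then the function f(x) = ∏_{i=1}^m φ_i((Kx)_i) is integrable over ℝⁿ, i.e., ∫_{ℝⁿ} f(x) dx < ∞. -/
open MeasureTheory Matrix

/-- The preimage of a Lebesgue-null set of `ℝ` under a nonzero linear functional
`x ↦ c ⬝ᵥ x` on `ℝⁿ` is null. -/
lemma poe_null_preimage_dot {n : ℕ} {c : Fin n → ℝ} (hc : c ≠ 0) {N : Set ℝ}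
    (hN : volume N = 0) : volume {x : Fin n → ℝ | c ⬝ᵥ x ∈ N} = 0 := by
  classical
  obtain ⟨N', hNN', hN'meas, hN'⟩ := exists_measurable_superset_of_null hN
  obtain ⟨k0, hk0⟩ : ∃ k, c k ≠ 0 := by
    by_contra h; push_neg at h; exact hc (funext h)
  set T : Matrix (Fin n) (Fin n) ℝ := (1 : Matrix (Fin n) (Fin n) ℝ).updateRow k0 c with hTdef
  have hTmul : ∀ (x : Fin n → ℝ) (k : Fin n),
      T.mulVec x k = if k = k0 then c ⬝ᵥ x else x k := by
    intro x k
    by_cases h : k = k0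
    · subst h
      simp [Matrix.mulVec, hTdef, Matrix.updateRow_self]
    · simp [Matrix.mulVec, hTdef, Matrix.updateRow_ne h, Matrix.one_apply, dotProduct,
        ite_mul, Finset.sum_ite_eq, h]
  have hT0 : ∀ x : Fin n → ℝ, T.mulVec x = 0 → x = 0 := by
    intro x hx
    have hne : ∀ k, k ≠ k0 → x k = 0 := by
      intro k hkk
      have := congrFun hx k
      rwa [hTmul x k, if_neg hkk] at this
    have hdot : c ⬝ᵥ x = 0 := by
      have := congrFun hx k0
      rwa [hTmul x k0, if_pos rfl] at this
    have hxk0 : x k0 = 0 := by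
      have : c ⬝ᵥ x = c k0 * x k0 := by
        rw [dotProduct]
        rw [Finset.sum_eq_single k0]
        · intro b _ hb; rw [hne b hb, mul_zero]
        · intro h; exact absurd (Finset.mem_univ k0) h
      rw [this] at hdot
      exact (mul_eq_zero.mp hdot).resolve_left hk0
    funext k
    by_cases h : k = k0
    · subst h; exact hxk0
    · exact hne k h
  have hTinj : Function.Injective T.mulVec := by
    have hker : LinearMap.ker T.mulVecLin = ⊥ := Matrix.ker_mulVecLin_eq_bot_iff.mpr hT0
    have := LinearMap.ker_eq_bot.mp hker
    rwa [Matrix.coe_mulVecLin] at this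
  have hTdet : T.det ≠ 0 := ((Matrix.isUnit_iff_isUnit_det T).mp (Matrix.mulVec_injective_iff_isUnit.mp hTinj)).ne_zero
  set L : (Fin n → ℝ) →ₗ[ℝ] (Fin n → ℝ) := Matrix.toLin' T with hLdef
  have hLdet : LinearMap.det L ≠ 0 := by
    rw [hLdef, LinearMap.det_toLin']; exact hTdet
  have hmap := Real.map_linearMap_volume_pi_eq_smul_volume_pi hLdet
  have hLmeas : Measurable L := L.continuous_of_finiteDimensional.measurable
  set S : Set (Fin n → ℝ) := {y | y k0 ∈ N'} with hSdef
  have hSmeas : MeasurableSet S := (measurable_pi_apply k0) hN'meas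
  have hSvol : volume S = 0 := by
    have hSpi : S = Set.pi Set.univ (fun k => if k = k0 then N' else Set.univ) := by
      ext y
      simp only [hSdef, Set.mem_setOf_eq, Set.mem_pi, Set.mem_univ, forall_true_left]
      constructor
      · intro h k
        by_cases hk : k = k0
        · subst hk; simpa using h
        · simp [hk]
      · intro h
        have := h k0
        simpa using this
    rw [hSpi, volume_pi, Measure.pi_pi]
    apply Finset.prod_eq_zero (Finset.mem_univ k0)
    simp [hN']
  have hsub : {x : Fin n → ℝ | c ⬝ᵥ x ∈ N} ⊆ L ⁻¹' S := by
    intro x hx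
    have : L x k0 = c ⬝ᵥ x := by
      rw [hLdef]
      show (Matrix.toLin' T) x k0 = c ⬝ᵥ x
      rw [Matrix.toLin'_apply, hTmul x k0, if_pos rfl]
    show L x k0 ∈ N'
    rw [this]
    exact hNN' hx
  refine measure_mono_null hsub ?_
  have : volume (L ⁻¹' S) = (Measure.map L volume) S := (Measure.map_apply hLmeas hSmeas).symm
  rw [this, hmap]
  simp [hSvol]

/-- Composition of an a.e. strongly measurable function on `ℝ` with a dot-product
functional is a.e. strongly measurable. -/
lemma poe_aesm_comp_dot {n : ℕ} (c : Fin n → ℝ) {φ : ℝ → ℝ}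
    (hφ : AEStronglyMeasurable φ (volume : Measure ℝ)) :
    AEStronglyMeasurable (fun x : Fin n → ℝ => φ (c ⬝ᵥ x))
      (volume : Measure (Fin n → ℝ)) := by
  by_cases hc : c = 0
  · subst hc
    have : (fun x : Fin n → ℝ => φ ((0 : Fin n → ℝ) ⬝ᵥ x)) = fun _ => φ 0 := by
      funext x; rw [zero_dotProduct]
    rw [this]
    exact aestronglyMeasurable_const
  · have hdotmeas : Measurable (fun x : Fin n → ℝ => c ⬝ᵥ x) := by
      show Measurable (fun x : Fin n → ℝ => ∑ k, c k * x k)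
      exact Finset.measurable_sum _ fun k _ => by fun_prop
    refine ⟨fun x => hφ.mk φ (c ⬝ᵥ x),
      hφ.stronglyMeasurable_mk.comp_measurable hdotmeas, ?_⟩
    have hnull : volume {t : ℝ | ¬ φ t = hφ.mk φ t} = 0 := ae_iff.mp hφ.ae_eq_mk
    rw [Filter.EventuallyEq, ae_iff]
    exact measure_mono_null (fun x hx => hx) (poe_null_preimage_dot hc hnull)

/-- If `K` is an `m × n` real matrix with trivial kernel and each factor
`φ i : ℝ → ℝ` is positive, bounded and integrable, then the product-of-experts density
`x ↦ ∏ i, φ i ((K x)_i)` is integrable over `ℝⁿ`. -/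
theorem poe_integrable_of_trivial_kernel
    {m n : ℕ} (K : Matrix (Fin m) (Fin n) ℝ)
    (hker : ∀ x : Fin n → ℝ, K.mulVec x = 0 → x = 0)
    (φ : Fin m → ℝ → ℝ)
    (hpos : ∀ i t, 0 < φ i t)
    (hbd : ∀ i, ∃ C : ℝ, ∀ t, φ i t ≤ C)
    (hint : ∀ i, Integrable (φ i) (volume : Measure ℝ)) :
    Integrable (fun x : Fin n → ℝ => ∏ i, φ i (K.mulVec x i))
      (volume : Measure (Fin n → ℝ)) := by
  classical
  -- Step 1: the rows of `K` span `ℝⁿ`.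
  have hker' : LinearMap.ker K.mulVecLin = ⊥ := Matrix.ker_mulVecLin_eq_bot_iff.mpr hker
  have hinjK : Function.Injective K.mulVecLin := LinearMap.ker_eq_bot.mp hker'
  have hrankK : K.rank = n := by
    rw [Matrix.rank, LinearMap.finrank_range_of_inj hinjK, Module.finrank_fin_fun]
  have hrankKT : Kᵀ.rank = n := by rw [Matrix.rank_transpose]; exact hrankK
  have hrange : LinearMap.range Kᵀ.mulVecLin = ⊤ := by
    apply Submodule.eq_top_of_finrank_eq
    have : Module.finrank ℝ ↥(LinearMap.range Kᵀ.mulVecLin) = Kᵀ.rank := rfl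
    rw [this, hrankKT, Module.finrank_fin_fun]
  have hspan : Submodule.span ℝ (Set.range Kᵀᵀ) = ⊤ := by
    rw [show Set.range Kᵀᵀ = Set.range (Matrix.col Kᵀ) from rfl, ← Matrix.range_mulVecLin]; exact hrange
  -- Step 2: choose `n` rows forming a basis.
  obtain ⟨b, hb_sub, hb_span, hb_li⟩ := exists_linearIndependent ℝ (Set.range Kᵀᵀ)
  have hb_top : Submodule.span ℝ b = ⊤ := hb_span.trans hspan
  let B : Module.Basis b ℝ (Fin n → ℝ) := Module.Basis.mk hb_li (by rw [Subtype.range_coe]; exact hb_top.ge)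
  let e : b ≃ Fin n := B.indexEquiv (Pi.basisFun ℝ (Fin n))
  have hmem : ∀ v : b, ∃ i : Fin m, Kᵀᵀ i = (v : Fin n → ℝ) := fun v => hb_sub v.2
  let g : Fin n → Fin m := fun j => (hmem (e.symm j)).choose
  have hg : ∀ j, Kᵀᵀ (g j) = ((e.symm j : b) : Fin n → ℝ) :=
    fun j => (hmem (e.symm j)).choose_spec
  have hginj : Function.Injective g := by
    intro j j' h
    have : ((e.symm j : b) : Fin n → ℝ) = ((e.symm j' : b) : Fin n → ℝ) := by
      rw [← hg j, ← hg j', h]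
    exact e.symm.injective (Subtype.coe_injective this)
  -- Step 3: the square submatrix `M` is invertible.
  let M : Matrix (Fin n) (Fin n) ℝ := Matrix.of fun j k => K (g j) k
  have hMrow : ∀ j, (fun k => M j k) = ((e.symm j : b) : Fin n → ℝ) := by
    intro j
    rw [← hg j]
    rfl
  have hM0 : ∀ x : Fin n → ℝ, M.mulVec x = 0 → x = 0 := by
    intro x hx
    have hdot : ∀ v ∈ b, v ⬝ᵥ x = 0 := by
      intro v hv
      have hj : ((e.symm (e ⟨v, hv⟩) : b) : Fin n → ℝ) = v := by
        rw [Equiv.symm_apply_apply]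
      have := congrFun hx (e ⟨v, hv⟩)
      rw [Matrix.mulVec] at this
      have h2 : (fun k => M (e ⟨v, hv⟩) k) ⬝ᵥ x = 0 := this
      rwa [hMrow, hj] at h2
    let ℓ : (Fin n → ℝ) →ₗ[ℝ] ℝ :=
      { toFun := fun w => w ⬝ᵥ x
        map_add' := fun a b' => add_dotProduct a b' x
        map_smul' := fun r a => smul_dotProduct r a x }
    have hle : Submodule.span ℝ b ≤ LinearMap.ker ℓ :=
      Submodule.span_le.mpr fun v hv => hdot v hv
    rw [hb_top] at hle
    have hxx : x ⬝ᵥ x = 0 := hle Submodule.mem_top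
    exact dotProduct_self_eq_zero.mp hxx
  have hMinj : Function.Injective M.mulVec := by
    have hkerM : LinearMap.ker M.mulVecLin = ⊥ := Matrix.ker_mulVecLin_eq_bot_iff.mpr hM0
    have := LinearMap.ker_eq_bot.mp hkerM
    rwa [Matrix.coe_mulVecLin] at this
  have hMdet : M.det ≠ 0 := ((Matrix.isUnit_iff_isUnit_det M).mp (Matrix.mulVec_injective_iff_isUnit.mp hMinj)).ne_zero
  -- Step 4: integrability of the product over the selected rows, composed with `M`.
  have hψ : Integrable (fun y : Fin n → ℝ => ∏ j, φ (g j) (y j))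
      (volume : Measure (Fin n → ℝ)) :=
    Integrable.fintype_prod fun j => hint (g j)
  set L : (Fin n → ℝ) →ₗ[ℝ] (Fin n → ℝ) := Matrix.toLin' M with hLdef
  have hLdet : LinearMap.det L ≠ 0 := by rw [hLdef, LinearMap.det_toLin']; exact hMdet
  have hmap := Real.map_linearMap_volume_pi_eq_smul_volume_pi hLdet
  have hLmeas : Measurable L := L.continuous_of_finiteDimensional.measurable
  have hψL : Integrable (fun x : Fin n → ℝ => ∏ j, φ (g j) (M.mulVec x j))
      (volume : Measure (Fin n → ℝ)) := by
    have haesm : AEStronglyMeasurable (fun y : Fin n → ℝ => ∏ j, φ (g j) (y j))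
        (Measure.map L volume) := by
      rw [hmap]
      exact hψ.aestronglyMeasurable.mono_ac Measure.smul_absolutelyContinuous
    have h1 : Integrable (fun y : Fin n → ℝ => ∏ j, φ (g j) (y j)) (Measure.map L volume) := by
      rw [hmap]
      exact hψ.smul_measure ENNReal.ofReal_ne_top
    have h2 := (integrable_map_measure haesm hLmeas.aemeasurable).mp h1
    have h3 : ((fun y : Fin n → ℝ => ∏ j, φ (g j) (y j)) ∘ L)
        = fun x : Fin n → ℝ => ∏ j, φ (g j) (M.mulVec x j) := by
      funext x
      simp only [Function.comp_apply, hLdef, Matrix.toLin'_apply]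
    rwa [h3] at h2
  -- Step 5: pointwise bound.
  choose C hC using hbd
  have hCpos : ∀ i, 0 < C i := fun i => (hpos i 0).trans_le (hC i 0)
  set s : Finset (Fin m) := Finset.univ.image g with hsdef
  set D : ℝ := ∏ i ∈ sᶜ, C i with hDdef
  have hD0 : 0 ≤ D := Finset.prod_nonneg fun i _ => (hCpos i).le
  have hMK : ∀ x j, M.mulVec x j = K.mulVec x (g j) := fun x j => rfl
  have hbound : ∀ x : Fin n → ℝ,
      ∏ i, φ i (K.mulVec x i) ≤ D * ∏ j, φ (g j) (M.mulVec x j) := by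
    intro x
    have hsplit : ∏ i, φ i (K.mulVec x i)
        = (∏ i ∈ s, φ i (K.mulVec x i)) * ∏ i ∈ sᶜ, φ i (K.mulVec x i) :=
      (Finset.prod_mul_prod_compl s _).symm
    have h1 : ∏ i ∈ s, φ i (K.mulVec x i) = ∏ j, φ (g j) (K.mulVec x (g j)) := by
      rw [hsdef]
      exact Finset.prod_image fun j _ j' _ h => hginj h
    have h2 : ∏ i ∈ sᶜ, φ i (K.mulVec x i) ≤ D :=
      Finset.prod_le_prod (fun i _ => (hpos i _).le) (fun i _ => hC i _)
    have hane : (0:ℝ) ≤ ∏ j, φ (g j) (K.mulVec x (g j)) :=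
      Finset.prod_nonneg fun j _ => (hpos _ _).le
    calc ∏ i, φ i (K.mulVec x i)
        = (∏ j, φ (g j) (K.mulVec x (g j))) * ∏ i ∈ sᶜ, φ i (K.mulVec x i) := by
          rw [hsplit, h1]
      _ ≤ (∏ j, φ (g j) (K.mulVec x (g j))) * D :=
          mul_le_mul_of_nonneg_left h2 hane
      _ = D * ∏ j, φ (g j) (M.mulVec x j) := by
          rw [mul_comm]
          congr 1
  -- Step 6: conclude.
  refine Integrable.mono' (hψL.const_mul D) ?_ ?_
  · apply Finset.aestronglyMeasurable_fun_prod
    intro i _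
    exact poe_aesm_comp_dot (fun j => K i j) (hint i).aestronglyMeasurable
  · refine Filter.Eventually.of_forall fun x => ?_
    rw [Real.norm_eq_abs, abs_of_pos (Finset.prod_pos fun i _ => hpos i _)]
    exact hbound x
end

section
/- Let K ∈ ℝ^{m×n} have non-trivial kernel N, and restrict the product-of-experts density f(x) = ∏_{i=1}^m φ_i((Kx)_i) to the orthogonal complement N^⊥ = range(Kᵀ). Then ∫_{N^⊥} f(x) dx < ∞, i.e., f defines a proper (finite-measure) density on the subspace N^⊥. -/
open MeasureTheory Matrix
open scoped ENNReal

/-- Composition of an a.e. strongly measurable function with a linear functional on a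
finite-dimensional space carrying an additive Haar measure is a.e. strongly measurable. -/
lemma aesm_comp_linear_functional {F : Type*} [NormedAddCommGroup F] [NormedSpace ℝ F]
    [MeasureSpace F] [BorelSpace F] [FiniteDimensional ℝ F]
    [(volume : Measure F).IsAddHaarMeasure]
    (ℓ : F →ₗ[ℝ] ℝ) {φ : ℝ → ℝ} (hφ : AEStronglyMeasurable φ (volume : Measure ℝ)) :
    AEStronglyMeasurable (fun v => φ (ℓ v)) (volume : Measure F) := by
  rcases eq_or_ne ℓ 0 with h | h
  · simp only [h, LinearMap.zero_apply]
    exact aestronglyMeasurable_const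
  · have hsurj : Function.Surjective ℓ := LinearMap.surjective_of_ne_zero h
    obtain ⟨c, -, hc⟩ := ℓ.exists_map_addHaar_eq_smul_addHaar volume volume hsurj
    have qmp : Measure.QuasiMeasurePreserving ℓ volume volume :=
      ⟨ℓ.continuous_of_finiteDimensional.measurable, by
        rw [hc]; exact Measure.smul_absolutelyContinuous⟩
    exact hφ.comp_quasiMeasurePreserving qmp

set_option maxHeartbeats 2000000 in
/-- Even when `K` has a non-trivial kernel `N`, the product-of-experts
density restricted to the orthogonal complement `N^⊥` is integrable with respect to the
Lebesgue measure on the subspace `N^⊥`. -/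
theorem poe_integrable_on_orthogonal_complement
    {m n : ℕ} (K : Matrix (Fin m) (Fin n) ℝ)
    (φ : Fin m → ℝ → ℝ)
    (hpos : ∀ i t, 0 < φ i t)
    (hbd : ∀ i, ∃ C : ℝ, ∀ t, φ i t ≤ C)
    (hint : ∀ i, Integrable (φ i) (volume : Measure ℝ)) :
    Integrable
      (fun v : ((LinearMap.ker (Matrix.toEuclideanLin K))ᗮ :
          Submodule ℝ (EuclideanSpace ℝ (Fin n))) =>
        ∏ i, φ i (Matrix.toEuclideanLin K (v : EuclideanSpace ℝ (Fin n)) i)) := by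
  classical
  set N : Submodule ℝ (EuclideanSpace ℝ (Fin n)) := LinearMap.ker (Matrix.toEuclideanLin K)
    with hN
  set E : Submodule ℝ (EuclideanSpace ℝ (Fin n)) := Nᗮ with hE
  -- the restricted linear map
  set T : E →ₗ[ℝ] EuclideanSpace ℝ (Fin m) :=
    (Matrix.toEuclideanLin K).comp E.subtype with hT
  have hTinj : Function.Injective T := by
    rw [← LinearMap.ker_eq_bot]
    rw [Submodule.eq_bot_iff]
    rintro x hx
    have h1 : (x : EuclideanSpace ℝ (Fin n)) ∈ N := hx
    have h2 : (x : EuclideanSpace ℝ (Fin n)) ∈ Nᗮ := x.2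
    have : (x : EuclideanSpace ℝ (Fin n)) = 0 :=
      (Submodule.mem_bot ℝ).1 ((N.orthogonal_disjoint).le_bot ⟨h1, h2⟩)
    exact Subtype.ext this
  -- the coordinate functionals
  set ℓf : Fin m → (E →ₗ[ℝ] ℝ) := fun i => (EuclideanSpace.projₗ i).comp T with hℓf
  have hℓf_apply : ∀ i (v : E), ℓf i v = T v i := fun _ _ => rfl
  have hker : (⨅ i, LinearMap.ker (ℓf i)) = ⊥ := by
    rw [Submodule.eq_bot_iff]
    intro x hx
    simp only [Submodule.mem_iInf, LinearMap.mem_ker] at hx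
    apply hTinj
    ext i
    have := hx i
    rw [hℓf_apply] at this
    simpa using this
  have hspan : Submodule.span ℝ (Set.range ℓf) = ⊤ := by
    rw [Submodule.eq_top_iff']
    intro g
    exact mem_span_of_iInf_ker_le_ker (by rw [hker]; exact bot_le)
  obtain ⟨t, hts, htspan, htli⟩ := exists_linearIndependent ℝ (Set.range ℓf)
  have htfin : t.Finite := htli.setFinite
  haveI : Fintype t := htfin.fintype
  have htspan_top : Submodule.span ℝ t = ⊤ := by rw [htspan, hspan]
  let b : Module.Basis t ℝ (Module.Dual ℝ E) :=
    Module.Basis.mk htli (by rw [Subtype.range_coe, htspan_top])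
  -- the evaluation map into coordinates indexed by t
  set Φ : E →ₗ[ℝ] (t → ℝ) := LinearMap.pi (fun j => (j : E →ₗ[ℝ] ℝ)) with hΦ
  have hΦinj : Function.Injective Φ := by
    rw [← LinearMap.ker_eq_bot, Submodule.eq_bot_iff]
    intro x hx
    have hx' : ∀ j : t, (j : E →ₗ[ℝ] ℝ) x = 0 := by
      intro j
      have hx0 : Φ x = (0 : t → ℝ) := hx
      exact congrFun hx0 j
    rw [← Module.forall_dual_apply_eq_zero_iff (R := ℝ)]
    intro g
    have hg : g ∈ Submodule.span ℝ t := by rw [htspan_top]; trivial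
    induction hg using Submodule.span_induction with
    | mem y hy => exact hx' ⟨y, hy⟩
    | zero => simp
    | add y z _ _ hy hz => simp [hy, hz]
    | smul c y _ hy => simp [hy]
  have hfr : Module.finrank ℝ E = Module.finrank ℝ (t → ℝ) := by
    rw [Module.finrank_fintype_fun_eq_card, ← Module.finrank_eq_card_basis b,
      Subspace.dual_finrank_eq]
  let L : E ≃ₗ[ℝ] (t → ℝ) := LinearMap.linearEquivOfInjective Φ hΦinj hfr
  have hL_apply : ∀ (v : E) (j : t), L v j = (j : E →ₗ[ℝ] ℝ) v := fun _ _ => rfl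
  -- choose indices realizing elements of t
  have hidx : ∀ j : t, ∃ i : Fin m, ℓf i = (j : E →ₗ[ℝ] ℝ) := fun j => hts j.2
  let idx : t → Fin m := fun j => (hidx j).choose
  have hidx_spec : ∀ j : t, ℓf (idx j) = (j : E →ₗ[ℝ] ℝ) := fun j => (hidx j).choose_spec
  have hidx_inj : Function.Injective idx := by
    intro j1 j2 h
    have : (j1 : E →ₗ[ℝ] ℝ) = (j2 : E →ₗ[ℝ] ℝ) := by
      rw [← hidx_spec j1, ← hidx_spec j2, h]
    exact Subtype.ext this
  -- key coordinate identity
  have hkey : ∀ (y : t → ℝ) (j : t), T (L.symm y) (idx j) = y j := by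
    intro y j
    have : ℓf (idx j) (L.symm y) = (j : E →ₗ[ℝ] ℝ) (L.symm y) := by rw [hidx_spec j]
    rw [hℓf_apply] at this
    rw [this, ← hL_apply (L.symm y) j, L.apply_symm_apply]
  -- bounds
  set C : Fin m → ℝ := fun i => (hbd i).choose with hC
  have hCle : ∀ i x, φ i x ≤ C i := fun i => (hbd i).choose_spec
  have hCpos : ∀ i, 0 < C i := fun i => lt_of_lt_of_le (hpos i 0) (hCle i 0)
  -- the function on the coordinate space
  set h : (t → ℝ) → ℝ := fun y => ∏ i, φ i (T (L.symm y) i) with hh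
  set s : Finset (Fin m) := Finset.univ.image idx with hs
  set g : (t → ℝ) → ℝ := fun y => (∏ i ∈ sᶜ, C i) * ∏ j, φ (idx j) (y j) with hg
  have hg_int : Integrable g (volume : Measure (t → ℝ)) :=
    (Integrable.fintype_prod (f := fun j : t => φ (idx j)) (fun j => hint (idx j))).const_mul _
  have h_aesm : AEStronglyMeasurable h (volume : Measure (t → ℝ)) := by
    apply Finset.aestronglyMeasurable_fun_prod
    intro i _
    exact aesm_comp_linear_functional ((ℓf i).comp (L.symm : (t → ℝ) →ₗ[ℝ] E)) (hint i).1
  have h_pos : ∀ y, 0 < h y := fun y => Finset.prod_pos (fun i _ => hpos i _)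
  have h_bound : ∀ y, ‖h y‖ ≤ g y := by
    intro y
    rw [Real.norm_eq_abs, abs_of_pos (h_pos y)]
    have hsplit : h y = (∏ i ∈ s, φ i (T (L.symm y) i)) * ∏ i ∈ sᶜ, φ i (T (L.symm y) i) :=
      (Finset.prod_mul_prod_compl s _).symm
    have hfirst : ∏ i ∈ s, φ i (T (L.symm y) i) = ∏ j, φ (idx j) (y j) := by
      rw [hs, Finset.prod_image (fun a _ b _ hab => hidx_inj hab)]
      exact Finset.prod_congr rfl (fun j _ => by rw [hkey])
    have hsecond : ∏ i ∈ sᶜ, φ i (T (L.symm y) i) ≤ ∏ i ∈ sᶜ, C i :=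
      Finset.prod_le_prod (fun i _ => (hpos i _).le) (fun i _ => hCle i _)
    rw [hsplit, hfirst, hg, mul_comm]
    apply mul_le_mul_of_nonneg_right hsecond
    exact Finset.prod_nonneg (fun j _ => (hpos _ _).le)
  have h_int : Integrable h (volume : Measure (t → ℝ)) :=
    hg_int.mono' h_aesm (Filter.Eventually.of_forall h_bound)
  -- transfer back through the linear equivalence
  let Lc : E ≃L[ℝ] (t → ℝ) := L.toContinuousLinearEquiv
  have hLc : (Lc : E → (t → ℝ)) = L := rfl
  haveI : (volume.map (L : E → (t → ℝ))).IsAddHaarMeasure := by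
    rw [← hLc]
    exact Lc.isAddHaarMeasure_map volume
  have heq : (volume : Measure E).map L
      = (Measure.addHaarScalarFactor ((volume : Measure E).map L)
          (volume : Measure (t → ℝ)) : ℝ≥0∞) • (volume : Measure (t → ℝ)) :=
    Measure.isAddLeftInvariant_eq_smul _ _
  have h_int_map : Integrable h ((volume : Measure E).map L) := by
    rw [heq]
    exact h_int.smul_measure ENNReal.coe_ne_top
  have hemb : MeasurableEmbedding (L : E → (t → ℝ)) := by
    rw [← hLc]
    exact Lc.toHomeomorph.measurableEmbedding
  have h_comp : Integrable (h ∘ L) (volume : Measure E) :=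
    (hemb.integrable_map_iff).1 h_int_map
  have : (fun v : E => ∏ i, φ i (Matrix.toEuclideanLin K (v : EuclideanSpace ℝ (Fin n)) i))
      = h ∘ L := by
    funext v
    simp only [Function.comp_apply, hh, L.symm_apply_apply]
    rfl
  rw [this]
  exact h_comp
end
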